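/- Let x* ∈ B (so h(x*) = 1). Then the set C(x*) = {s ∈ ℝ^n : s_i ≥ 0 for all i, and ∑_{i=1}^n α_i(x*) s_i ≤ 1}, where α_i(x*) = (N̄_i − 1 + ∏_{j≠i}(1 + x*_j)) / (L_i N̄_i), is a convex subset of the rate region R and contains the boundary throughput vector s(x*, N̄). -/

import Mathlib

open Finset

noncomputable def Xfun (n : ℕ) (a : ℝ) (x N : Fin n → ℝ) : ℝ :=
  a + (∑ k, (N k - 1) * x k) + (∏ k, (1 + x k)) - 1

noncomputable def sVec (n : ℕ) (a : ℝ) (L x N : Fin n → ℝ) : Fin n → ℝ :=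
  fun i => N i * L i * x i / Xfun n a x N

noncomputable def hfun (n : ℕ) (a : ℝ) (x : Fin n → ℝ) : ℝ :=
  (∑ i, x i / (1 + x i)) + (1 - a) / ∏ j, (1 + x j)

def rateRegion (n : ℕ) (a : ℝ) (L Nlo Nhi : Fin n → ℝ) : Set (Fin n → ℝ) :=
  {u | ∃ x N : Fin n → ℝ, (∀ i, 0 ≤ x i) ∧ (∀ i, Nlo i ≤ N i ∧ N i ≤ Nhi i) ∧
    u = sVec n a L x N}

noncomputable def alpha (n : ℕ) (L Nhi xs : Fin n → ℝ) (i : Fin n) : ℝ :=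
  (Nhi i - 1 + ∏ j ∈ Finset.univ.erase i, (1 + xs j)) / (L i * Nhi i)

def Cset (n : ℕ) (L Nhi xs : Fin n → ℝ) : Set (Fin n → ℝ) :=
  {sv | (∀ i, 0 ≤ sv i) ∧ ∑ i, alpha n L Nhi xs i * sv i ≤ 1}

lemma one_le_prod_real {ι : Type*} (s : Finset ι) (f : ι → ℝ)
    (h : ∀ i ∈ s, 1 ≤ f i) : 1 ≤ ∏ i ∈ s, f i := by
  calc (1:ℝ) = ∏ _i ∈ s, 1 := by simp
  _ ≤ ∏ i ∈ s, f i := Finset.prod_le_prod (fun i _ => by norm_num) (fun i hi => h i hi)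

lemma single_le_prod_real {ι : Type*} [DecidableEq ι] (s : Finset ι) (f : ι → ℝ)
    (h : ∀ i ∈ s, 1 ≤ f i) {a : ι} (ha : a ∈ s) : f a ≤ ∏ i ∈ s, f i := by
  rw [← Finset.mul_prod_erase s f ha]
  have h1 : (1:ℝ) ≤ ∏ i ∈ s.erase a, f i :=
    one_le_prod_real _ _ (fun i hi => h i (Finset.mem_of_mem_erase hi))
  have hfa : (0:ℝ) ≤ f a := le_trans zero_le_one (h a ha)
  exact le_mul_of_one_le_right hfa h1

theorem stmt0 (n : ℕ) (hn : 2 ≤ n) (a : ℝ) (ha0 : 0 < a) (ha1 : a < 1)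
    (L Nlo Nhi : Fin n → ℝ) (hL : ∀ i, 0 < L i)
    (hNlo : ∀ i, 1 ≤ Nlo i) (hNhi : ∀ i, Nlo i ≤ Nhi i)
    (xs : Fin n → ℝ) (hxs : ∀ i, 0 ≤ xs i) (hB : hfun n a xs = 1) :
    Convex ℝ (Cset n L Nhi xs) ∧
    Cset n L Nhi xs ⊆ rateRegion n a L Nlo Nhi ∧
    sVec n a L xs Nhi ∈ Cset n L Nhi xs := by
  classical
  set P : Fin n → ℝ := fun i => ∏ j ∈ Finset.univ.erase i, (1 + xs j) with hPdef
  set Q : ℝ := ∏ j, (1 + xs j) with hQdef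
  have hx1 : ∀ i, (0:ℝ) < 1 + xs i := fun i => by have := hxs i; linarith
  have hQpos : 0 < Q := Finset.prod_pos (fun i _ => hx1 i)
  have hQfac : ∀ i, (1 + xs i) * P i = Q := by
    intro i
    show (1 + xs i) * ∏ j ∈ Finset.univ.erase i, (1 + xs j) = ∏ j, (1 + xs j)
    exact Finset.mul_prod_erase Finset.univ (fun j => 1 + xs j) (Finset.mem_univ i)
  have hP1 : ∀ i, 1 ≤ P i := by
    intro i
    show (1:ℝ) ≤ ∏ j ∈ Finset.univ.erase i, (1 + xs j)
    apply one_le_prod_real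
    intro j hj
    have := hxs j
    linarith
  have hN1 : ∀ i, 1 ≤ Nhi i := fun i => le_trans (hNlo i) (hNhi i)
  have hNpos : ∀ i, 0 < Nhi i := fun i => lt_of_lt_of_le one_pos (hN1 i)
  -- boundary identity
  have hIdent : ∑ i, xs i * P i = Q - 1 + a := by
    have h0 : (∑ i, xs i / (1 + xs i)) = 1 - (1-a)/Q := by
      have hb := hB
      simp only [hfun, ← hQdef] at hb
      linarith
    have h1 : ∀ i ∈ Finset.univ, xs i * P i = (xs i / (1 + xs i)) * Q := by
      intro i _
      rw [← hQfac i]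
      have hne := (hx1 i).ne'
      field_simp
    rw [Finset.sum_congr rfl h1, ← Finset.sum_mul, h0]
    have hQne := hQpos.ne'
    field_simp
    ring
  -- some positive coordinate
  have hex : ∃ i, 0 < xs i := by
    by_contra h
    push_neg at h
    have hz : ∀ i, xs i = 0 := fun i => le_antisymm (h i) (hxs i)
    have hQ1 : Q = 1 := by
      rw [hQdef]; apply Finset.prod_eq_one; intro i _; rw [hz i]; ring
    have hzero : ∑ i, xs i * P i = 0 :=
      Finset.sum_eq_zero (fun i _ => by rw [hz i]; ring)
    rw [hQ1, hzero] at hIdent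
    linarith
  obtain ⟨i0, hi0⟩ := hex
  have hQ1 : 1 < Q := by
    calc (1:ℝ) < 1 + xs i0 := by linarith
    _ ≤ (1 + xs i0) * P i0 := le_mul_of_one_le_right (by linarith) (hP1 i0)
    _ = Q := hQfac i0
  -- X at (xs, Nhi)
  have hXstar : Xfun n a xs Nhi = ∑ i, xs i * (Nhi i - 1 + P i) := by
    simp only [Xfun, ← hQdef]
    have h2 : ∑ i, xs i * (Nhi i - 1 + P i)
        = (∑ i, (Nhi i - 1) * xs i) + ∑ i, xs i * P i := by
      rw [← Finset.sum_add_distrib]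
      apply Finset.sum_congr rfl
      intro i _; ring
    rw [h2, hIdent]; ring
  have hXpos : 0 < Xfun n a xs Nhi := by
    rw [hXstar]
    apply Finset.sum_pos'
    · intro i _
      exact mul_nonneg (hxs i) (by have := hN1 i; have := hP1 i; linarith)
    · exact ⟨i0, Finset.mem_univ i0,
        mul_pos hi0 (by have := hN1 i0; have := hP1 i0; linarith)⟩
  -- Part 1 : convexity
  have part1 : Convex ℝ (Cset n L Nhi xs) := by
    intro p hp q hq κ μ hκ hμ hκμ
    constructor
    · intro i
      simp only [Pi.add_apply, Pi.smul_apply, smul_eq_mul]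
      exact add_nonneg (mul_nonneg hκ (hp.1 i)) (mul_nonneg hμ (hq.1 i))
    · have hdist : ∑ i, alpha n L Nhi xs i * (κ • p + μ • q) i
          = κ * (∑ i, alpha n L Nhi xs i * p i) + μ * (∑ i, alpha n L Nhi xs i * q i) := by
        simp only [Pi.add_apply, Pi.smul_apply, smul_eq_mul]
        rw [Finset.mul_sum, Finset.mul_sum, ← Finset.sum_add_distrib]
        apply Finset.sum_congr rfl
        intro i _; ring
      rw [hdist]
      calc κ * (∑ i, alpha n L Nhi xs i * p i) + μ * (∑ i, alpha n L Nhi xs i * q i)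
          ≤ κ * 1 + μ * 1 :=
            add_le_add (mul_le_mul_of_nonneg_left hp.2 hκ)
              (mul_le_mul_of_nonneg_left hq.2 hμ)
      _ = 1 := by rw [mul_one, mul_one, hκμ]
  -- Part 3 : membership
  have part3 : sVec n a L xs Nhi ∈ Cset n L Nhi xs := by
    constructor
    · intro i
      simp only [sVec]
      exact div_nonneg
        (mul_nonneg (mul_nonneg (by have := hN1 i; linarith) (hL i).le) (hxs i)) hXpos.le
    · have hterm : ∀ i ∈ Finset.univ, alpha n L Nhi xs i * sVec n a L xs Nhi i
          = xs i * (Nhi i - 1 + P i) / Xfun n a xs Nhi := by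
        intro i _
        simp only [alpha, sVec, ← hPdef]
        have hLne : L i ≠ 0 := (hL i).ne'
        have hNne : Nhi i ≠ 0 := (hNpos i).ne'
        field_simp
        ring
      rw [Finset.sum_congr rfl hterm, ← Finset.sum_div, ← hXstar,
        div_self hXpos.ne']
  -- Part 2 : subset
  have part2 : Cset n L Nhi xs ⊆ rateRegion n a L Nlo Nhi := by
    rintro s ⟨hs0, hsum⟩
    set c : Fin n → ℝ := fun i => s i / (Nhi i * L i) with hcdef
    have hc0 : ∀ i, 0 ≤ c i :=
      fun i => div_nonneg (hs0 i) (mul_nonneg (hNpos i).le (hL i).le)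
    have hsum' : ∑ i, c i * (Nhi i - 1 + P i) ≤ 1 := by
      have hterm : ∀ i ∈ Finset.univ, c i * (Nhi i - 1 + P i)
          = alpha n L Nhi xs i * s i := by
        intro i _
        simp only [alpha, hcdef, ← hPdef]
        have hLne : L i ≠ 0 := (hL i).ne'
        have hNne : Nhi i ≠ 0 := (hNpos i).ne'
        field_simp
        ring
      rw [Finset.sum_congr rfl hterm]
      exact hsum
    by_cases hz : ∀ i, s i = 0
    · refine ⟨fun _ => 0, Nhi, fun i => le_refl 0, fun i => ⟨hNhi i, le_refl _⟩, ?_⟩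
      funext i
      simp [sVec, hz i]
    · push_neg at hz
      obtain ⟨j0, hj0⟩ := hz
      have hcj0 : 0 < c j0 :=
        div_pos (lt_of_le_of_ne (hs0 j0) (Ne.symm hj0)) (mul_pos (hNpos j0) (hL j0))
      set f : ℝ → ℝ := fun t => ∏ k, (1 + c k * t) with hfdef
      have hfcont : Continuous f := by
        apply continuous_finset_prod
        intro k _
        exact continuous_const.add (continuous_const.mul continuous_id)
      have hf0 : f 0 = 1 := by simp [hfdef]
      set T1 : ℝ := Q / c j0 with hT1def
      have hT1 : 0 ≤ T1 := div_nonneg hQpos.le hcj0.le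
      have hfT1 : Q ≤ f T1 := by
        have h1 : 1 + c j0 * T1 = 1 + Q := by
          rw [hT1def]; field_simp
        calc Q ≤ 1 + Q := by linarith
        _ = 1 + c j0 * T1 := h1.symm
        _ ≤ f T1 := by
            have hfr : f T1 = ∏ k, (1 + c k * T1) := rfl
            rw [hfr]
            have hfac : ∀ k ∈ (Finset.univ : Finset (Fin n)), (1:ℝ) ≤ 1 + c k * T1 := by
              intro k _
              have := mul_nonneg (hc0 k) hT1
              linarith
            exact single_le_prod_real _ _ hfac (Finset.mem_univ j0)
      obtain ⟨t2, ht2mem, ht2⟩ : ∃ t2 ∈ Set.Icc (0:ℝ) T1, f t2 = Q := by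
        have hIVT := intermediate_value_Icc hT1 hfcont.continuousOn
        have hmem : Q ∈ Set.Icc (f 0) (f T1) := by rw [hf0]; exact ⟨hQ1.le, hfT1⟩
        obtain ⟨t2, h1, h2⟩ := hIVT hmem
        exact ⟨t2, h1, h2⟩
      have ht20 : 0 ≤ t2 := ht2mem.1
      have hw1 : ∀ k, (0:ℝ) < 1 + c k * t2 := fun k => by nlinarith [hc0 k, ht20]
      -- Claim G via concavity of log
      have hG : Q - 1 + a ≤ ∑ k, (c k * t2) * P k := by
        have hlogsum : ∑ k, Real.log (1 + c k * t2) = ∑ k, Real.log (1 + xs k) := by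
          rw [← Real.log_prod (fun k _ => (hw1 k).ne'),
            ← Real.log_prod (fun k _ => (hx1 k).ne')]
          have : ∏ k, (1 + c k * t2) = f t2 := rfl
          rw [this, ht2, hQdef]
        have hkey : ∀ k ∈ Finset.univ,
            Real.log (1 + c k * t2) - Real.log (1 + xs k)
              ≤ (c k * t2 - xs k) / (1 + xs k) := by
          intro k _
          have hr : (0:ℝ) < (1 + c k * t2) / (1 + xs k) := div_pos (hw1 k) (hx1 k)
          have h2 := Real.log_le_sub_one_of_pos hr
          rw [Real.log_div (hw1 k).ne' (hx1 k).ne'] at h2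
          have h3 : (1 + c k * t2) / (1 + xs k) - 1 = (c k * t2 - xs k) / (1 + xs k) := by
            rw [div_sub_one (hx1 k).ne']
            ring_nf
          linarith
        have hsum2 : 0 ≤ ∑ k, (c k * t2 - xs k) / (1 + xs k) := by
          have h4 := Finset.sum_le_sum hkey
          rw [Finset.sum_sub_distrib] at h4
          linarith [hlogsum]
        have hterm : ∀ k ∈ Finset.univ,
            ((c k * t2 - xs k) / (1 + xs k)) * Q = (c k * t2 - xs k) * P k := by
          intro k _
          rw [← hQfac k]
          have hne := (hx1 k).ne'
          field_simp
        have h5 : 0 ≤ ∑ k, (c k * t2 - xs k) * P k := by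
          have h6 : 0 ≤ (∑ k, (c k * t2 - xs k) / (1 + xs k)) * Q :=
            mul_nonneg hsum2 hQpos.le
          rw [Finset.sum_mul, Finset.sum_congr rfl hterm] at h6
          exact h6
        have h7 : ∑ k, (c k * t2 - xs k) * P k
            = (∑ k, (c k * t2) * P k) - ∑ k, xs k * P k := by
          rw [← Finset.sum_sub_distrib]
          apply Finset.sum_congr rfl
          intro k _; ring
        rw [h7] at h5
        linarith [hIdent]
      -- phi and IVT
      set φ : ℝ → ℝ := fun t => a + (∑ k, (Nhi k - 1) * (c k * t)) + f t - 1 - t with hφdef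
      have hφcont : Continuous φ := by
        have h1 : Continuous fun t : ℝ => ∑ k, (Nhi k - 1) * (c k * t) :=
          continuous_finset_sum _
            (fun k _ => continuous_const.mul (continuous_const.mul continuous_id))
        exact (((continuous_const.add h1).add hfcont).sub continuous_const).sub
          continuous_id
      have hφ0 : φ 0 = a := by
        simp [hφdef, hf0]
      have hφt2 : φ t2 ≤ 0 := by
        have expand : ∑ k, (Nhi k - 1) * (c k * t2) = t2 * ∑ k, c k * (Nhi k - 1) := by
          rw [Finset.mul_sum]
          apply Finset.sum_congr rfl
          intro k _; ring
        have h2 : ∑ k, c k * (Nhi k - 1) ≤ 1 - ∑ k, c k * P k := by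
          have h3 : (∑ k, c k * (Nhi k - 1)) + ∑ k, c k * P k
              = ∑ k, c k * (Nhi k - 1 + P k) := by
            rw [← Finset.sum_add_distrib]
            apply Finset.sum_congr rfl
            intro k _; ring
          linarith [hsum', h3]
        have h4 : t2 * (∑ k, c k * (Nhi k - 1)) ≤ t2 * (1 - ∑ k, c k * P k) :=
          mul_le_mul_of_nonneg_left h2 ht20
        have h5 : ∑ k, (c k * t2) * P k = t2 * ∑ k, c k * P k := by
          rw [Finset.mul_sum]
          apply Finset.sum_congr rfl
          intro k _; ring
        have h6 : Q - 1 + a ≤ t2 * ∑ k, c k * P k := by rw [← h5]; exact hG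
        have h8 : φ t2 = a + (∑ k, (Nhi k - 1) * (c k * t2)) + Q - 1 - t2 := by
          simp only [hφdef, ht2]
        rw [h8, expand]
        nlinarith [h4, h6]
      obtain ⟨t0, ht0mem, ht0⟩ : ∃ t0 ∈ Set.Icc 0 t2, φ t0 = 0 := by
        have hIVT := intermediate_value_Icc' ht20 hφcont.continuousOn
        have hmem : (0:ℝ) ∈ Set.Icc (φ t2) (φ 0) := ⟨hφt2, by rw [hφ0]; exact ha0.le⟩
        obtain ⟨t0, h1, h2⟩ := hIVT hmem
        exact ⟨t0, h1, h2⟩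
      have ht00 : 0 ≤ t0 := ht0mem.1
      have ht0pos : 0 < t0 := by
        rcases eq_or_lt_of_le ht00 with h | h
        · exfalso
          rw [← h] at ht0
          rw [hφ0] at ht0
          linarith
        · exact h
      have hXeq : Xfun n a (fun k => c k * t0) Nhi = t0 := by
        have h9 := ht0
        simp only [hφdef] at h9
        simp only [Xfun]
        have h10 : ∏ k, (1 + c k * t0) = f t0 := rfl
        rw [h10]
        linarith
      refine ⟨fun k => c k * t0, Nhi, fun k => mul_nonneg (hc0 k) ht00,
        fun i => ⟨hNhi i, le_refl _⟩, ?_⟩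
      funext i
      simp only [sVec, hXeq]
      simp only [hcdef]
      have ht0ne : t0 ≠ 0 := ht0pos.ne'
      have hLne : L i ≠ 0 := (hL i).ne'
      have hNne : Nhi i ≠ 0 := (hNpos i).ne'
      field_simp
  exact ⟨part1, part2, part3⟩
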